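/- Let ε : [0,l] → ℝ be measurable with 1 ≤ ε(s) for all s, let c > 0, and let z ∈ ℂ with Im(z²) < 0. Let ψ be the solution of ψ''(s) = -(z²/c²)·ε(s)·ψ(s) with ψ(0) = 0, ψ'(0) = 1. Then ψ(s) ≠ 0 for all s in (0, l]. -/

import Mathlib

open Set

/-- If `Im (z²) < 0`, the solution `ψ` of `ψ'' = -(z²/c²)·ε·ψ`, `ψ(0)=0`, `ψ'(0)=1`,
with measurable `ε ≥ 1`, does not vanish on `(0, l]`. -/
theorem psi_ne_zero
    (l c : ℝ) (hl : 0 < l) (hc : 0 < c)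
    (ε : ℝ → ℝ) (hmeas : Measurable ε) (hε : ∀ s, 1 ≤ ε s)
    (z : ℂ) (hz : (z ^ 2).im < 0)
    (ψ ψ' : ℝ → ℂ)
    (hψ : ∀ s ∈ Icc (0 : ℝ) l, HasDerivAt ψ (ψ' s) s)
    (hψ' : ∀ s ∈ Icc (0 : ℝ) l,
      HasDerivAt ψ' (-(z ^ 2 / (c : ℂ) ^ 2) * (ε s : ℂ) * ψ s) s)
    (h0 : ψ 0 = 0) (h1 : ψ' 0 = 1) :
    ∀ s ∈ Ioc (0 : ℝ) l, ψ s ≠ 0 := by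
  rintro s₀ ⟨hs₀0, hs₀l⟩ hcontra
  set K : ℝ := -(z ^ 2).im / c ^ 2 with hKdef
  have hK : 0 < K := div_pos (by linarith) (by positivity)
  set G : ℝ → ℝ := fun s => ((starRingEnd ℂ) (ψ s) * ψ' s).im with hGdef
  -- derivative of G
  have hG : ∀ s ∈ Icc (0 : ℝ) l,
      HasDerivAt G (K * (ε s * ‖ψ s‖ ^ 2)) s := by
    intro s hs
    have h1' := ((hψ s hs).star.mul (hψ' s hs))
    have h2 := Complex.imCLM.hasFDerivAt.comp_hasDerivAt s h1'
    simp only [Function.comp_def, Complex.imCLM_apply, Complex.star_def] at h2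
    convert h2 using 1
    · rfl
    · rfl
    · rfl
    have e1 : (starRingEnd ℂ) (ψ' s) * ψ' s = ((‖ψ' s‖ : ℂ)) ^ 2 :=
      Complex.conj_mul' (ψ' s)
    have e2 : (starRingEnd ℂ) (ψ s) * (-(z ^ 2 / (c : ℂ) ^ 2) * (ε s : ℂ) * ψ s)
        = -(z ^ 2 / (c : ℂ) ^ 2) * (ε s : ℂ) * ((‖ψ s‖ : ℂ)) ^ 2 := by
      rw [← Complex.conj_mul' (ψ s)]; ring
    rw [e1, e2]
    have hc2 : ((c : ℂ)) ^ 2 = ((c ^ 2 : ℝ) : ℂ) := by push_cast; ring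
    rw [hc2, ← Complex.ofReal_pow, ← Complex.ofReal_pow,
      show -(z ^ 2 / ((c ^ 2 : ℝ) : ℂ)) * ((ε s : ℝ) : ℂ) * ((‖ψ s‖ ^ 2 : ℝ) : ℂ)
        = -(z ^ 2) * (((ε s * ‖ψ s‖ ^ 2 : ℝ)) : ℂ) / ((c ^ 2 : ℝ) : ℂ) by push_cast; ring]
    rw [Complex.add_im, Complex.ofReal_im, Complex.div_ofReal_im, Complex.mul_im,
      Complex.ofReal_re, Complex.ofReal_im, Complex.neg_im, hKdef]
    have : (0:ℝ) < c ^ 2 := by positivity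
    field_simp
    ring
  have hIcc : Icc (0 : ℝ) s₀ ⊆ Icc 0 l := Icc_subset_Icc le_rfl hs₀l
  -- G is monotone on [0, s₀]
  have hmono : MonotoneOn G (Icc 0 s₀) := by
    apply monotoneOn_of_deriv_nonneg (convex_Icc 0 s₀)
    · exact fun s hs => ((hG s (hIcc hs)).continuousAt).continuousWithinAt
    · intro s hs
      rw [interior_Icc] at hs
      exact (hG s (hIcc (Ioo_subset_Icc_self hs))).differentiableAt.differentiableWithinAt
    · intro s hs
      rw [interior_Icc] at hs
      rw [(hG s (hIcc (Ioo_subset_Icc_self hs))).deriv]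
      have := hε s
      positivity
  have hG0 : G 0 = 0 := by simp [hGdef, h0]
  have hGs₀ : G s₀ = 0 := by simp [hGdef, hcontra]
  have hGzero : ∀ s ∈ Icc (0 : ℝ) s₀, G s = 0 := by
    intro s hs
    have hle : G s ≤ 0 := hGs₀ ▸ hmono hs (right_mem_Icc.mpr hs₀0.le) hs.2
    have hge : 0 ≤ G s := hG0 ▸ hmono (left_mem_Icc.mpr hs₀0.le) hs hs.1
    linarith
  -- ψ vanishes on (0, s₀)
  have hψzero : ∀ s ∈ Ioo (0 : ℝ) s₀, ψ s = 0 := by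
    intro s hs
    have hev : G =ᶠ[nhds s] (fun _ => (0 : ℝ)) :=
      Filter.eventuallyEq_of_mem (Ioo_mem_nhds hs.1 hs.2)
        (fun t ht => hGzero t (Ioo_subset_Icc_self ht))
    have hd0 : HasDerivAt G 0 s := (hasDerivAt_const s (0 : ℝ)).congr_of_eventuallyEq hev
    have := (hG s (hIcc (Ioo_subset_Icc_self hs))).unique hd0
    have hεs := hε s
    by_contra hne
    have hnorm : 0 < ‖ψ s‖ := norm_pos_iff.mpr hne
    have hpos : 0 < K * (ε s * ‖ψ s‖ ^ 2) :=
      mul_pos hK (mul_pos (lt_of_lt_of_le one_pos hεs) (pow_pos hnorm 2))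
    linarith
  -- hence ψ' vanishes on (0, s₀)
  have hψ'zero : ∀ s ∈ Ioo (0 : ℝ) s₀, ψ' s = 0 := by
    intro s hs
    have hev : ψ =ᶠ[nhds s] (fun _ => (0 : ℂ)) :=
      Filter.eventuallyEq_of_mem (Ioo_mem_nhds hs.1 hs.2) (fun t ht => hψzero t ht)
    have hd0 : HasDerivAt ψ 0 s := (hasDerivAt_const s (0 : ℂ)).congr_of_eventuallyEq hev
    exact ((hψ s (hIcc (Ioo_subset_Icc_self hs))).unique hd0)
  -- continuity of ψ' at 0 forces ψ' 0 = 0, contradiction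
  have hcont : ContinuousAt ψ' 0 :=
    (hψ' 0 (left_mem_Icc.mpr hl.le)).continuousAt
  have ht1 : Filter.Tendsto ψ' (nhdsWithin 0 (Ioi (0:ℝ))) (nhds (ψ' 0)) :=
    hcont.continuousWithinAt.tendsto
  have ht2 : Filter.Tendsto ψ' (nhdsWithin 0 (Ioi (0:ℝ))) (nhds 0) := by
    apply Filter.Tendsto.congr' _ tendsto_const_nhds
    filter_upwards [Ioo_mem_nhdsGT_of_mem (Set.left_mem_Ico.mpr hs₀0)] with t ht
    exact (hψ'zero t ht).symm
  have : ψ' 0 = 0 := tendsto_nhds_unique ht1 ht2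
  rw [h1] at this
  exact one_ne_zero this
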